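/- Let K ⊆ L be languages over Σ and let γ ∈ Σ be a symbol not occurring in any string of L. Define L' = pr(Lγ) and K' = pr(Kγ ∪ L). Then { s ∈ K' | s ++ [γ] ∈ L' } = L. -/
import Mathlib


open List

/-- Natural projection onto a subalphabet: keep only symbols in `A`. -/
def natProj {α : Type*} (A : Set α) [DecidablePred (· ∈ A)] (s : List α) : List α :=
  s.filter (fun a => decide (a ∈ A))

/-- Observers `obs` together with fusion rule `f` solve the observation problem
`Obs(f, L, K, (Sio i))`. -/
def SolvesObs {α : Type*} {n : ℕ} {V : Fin n → Type*} (f : (∀ i, V i) → Bool)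
    (obs : ∀ i, List α → V i) (L K : Set (List α))
    (Sio : Fin n → Set α) [∀ i, DecidablePred (· ∈ Sio i)] : Prop :=
  ∀ s ∈ L,
    (s ∈ K → f (fun i => obs i (natProj (Sio i) s)) = true) ∧
    (s ∈ L \ K → f (fun i => obs i (natProj (Sio i) s)) = false)

/-- `s` is positive (contains the fault event `σf`) for at least `m` steps. -/
def PosSteps {α : Type*} (σf : α) (m : ℕ) (s : List α) : Prop :=
  ∃ π τ : List α, s = π ++ [σf] ++ τ ∧ m ≤ τ.length

/-- Observers `obs` together with fusion rule `f` solve the diagnosis problem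
`Dx(f, L, (Sio i), σf, m)`. -/
def SolvesDx {α : Type*} {n : ℕ} {V : Fin n → Type*} (f : (∀ i, V i) → Bool)
    (obs : ∀ i, List α → V i) (L : Set (List α))
    (Sio : Fin n → Set α) [∀ i, DecidablePred (· ∈ Sio i)]
    (σf : α) (m : ℕ) : Prop :=
  ∀ s ∈ L,
    (PosSteps σf m s → f (fun i => obs i (natProj (Sio i) s)) = true) ∧
    (σf ∉ s → f (fun i => obs i (natProj (Sio i) s)) = false)

/-- Controllers `con σ` together with fusion rules `fus σ`, for `σ ∈ Sc`, solve the
control problem `Con(L, K, (Sio i), Sc)`. -/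
def SolvesCon {α : Type*} {n : ℕ} {V : Fin n → Type*} (fus : α → (∀ i, V i) → Bool)
    (con : α → ∀ i, List α → V i) (L K : Set (List α))
    (Sio : Fin n → Set α) [∀ i, DecidablePred (· ∈ Sio i)] (Sc : Set α) : Prop :=
  ∀ σ ∈ Sc, ∀ s ∈ K,
    (s ++ [σ] ∈ K → fus σ (fun i => con σ i (natProj (Sio i) s)) = true) ∧
    (s ++ [σ] ∈ L \ K → fus σ (fun i => con σ i (natProj (Sio i) s)) = false)

/-- Prefix closure of a language. -/
def pr {α : Type*} (M : Set (List α)) : Set (List α) := {s | ∃ t ∈ M, s <+: t}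

/-- `Mγ`: every string of `M` extended by the symbol `γ`. -/
def catSym {α : Type*} (M : Set (List α)) (γ : α) : Set (List α) :=
  {t | ∃ s ∈ M, t = s ++ [γ]}

/-- With `L' = pr(Lγ)` and `K' = pr(Kγ ∪ L)`, we have `L'_γ = { s ∈ K' | sγ ∈ L' } = L`. -/
theorem Lgamma_eq {α : Type*} (L K : Set (List α)) (hKL : K ⊆ L)
    (γ : α) (hγ : ∀ s ∈ L, γ ∉ s) :
    {s ∈ pr (catSym K γ ∪ L) | s ++ [γ] ∈ pr (catSym L γ)} = L := by
  ext s
  simp only [Set.mem_setOf_eq, pr, catSym, Set.mem_union]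
  constructor
  · rintro ⟨-, t, ⟨u, hu, rfl⟩, hpre⟩
    rcases lt_or_ge s.length u.length with h | h
    · exfalso
      have h2 : s ++ [γ] <+: u :=
        prefix_of_prefix_length_le hpre (prefix_append u [γ]) (by simpa using h)
      exact hγ u hu (h2.subset (by simp))
    · have hlen : (s ++ [γ]).length = (u ++ [γ]).length := by
        have := hpre.length_le
        simp only [length_append, length_singleton] at this ⊢
        omega
      have := hpre.eq_of_length hlen
      have : s = u := by simpa using this
      exact this ▸ hu
  · intro hs
    exact ⟨⟨s, Or.inr hs, prefix_refl s⟩, s ++ [γ], ⟨s, hs, rfl⟩, prefix_refl _⟩
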